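/- Let K = 1 (so k = 1) and let r_1 be as defined, i.e. r_1(t) = √(2/π)·∫_0^{1/√t} [e^{−y²/2} − (1/(2y²))·(1 − e^{−2y²})] dy. Then lim_{t→0⁺} r_1(t)/√t = 1/√(2π), i.e. r_1(t) ∼ √(t/(2π)) as t → 0⁺. -/

import Mathlib

open MeasureTheory Real Filter Set Topology

/-- The explicit integral formula for the Bessel(3) call price with strike `K = 1/k`. -/
noncomputable def rCall (k t : ℝ) : ℝ :=
  (1 / k) * Real.sqrt (2 / Real.pi) *
    ∫ y in (0:ℝ)..(1 / Real.sqrt t),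
      (Real.exp (-(y ^ 2) / 2) -
        (1 / (2 * k * y ^ 2)) *
          (Real.exp (-((1 - k) ^ 2 * y ^ 2) / 2) - Real.exp (-((1 + k) ^ 2 * y ^ 2) / 2)))

namespace Stmt4Aux

/-- The integrand at `k = 1`. -/
noncomputable def f (y : ℝ) : ℝ :=
  Real.exp (-(y ^ 2) / 2) - 1 / (2 * y ^ 2) * (1 - Real.exp (-(2 * y ^ 2)))

noncomputable def g (y : ℝ) : ℝ :=
  Real.exp (-(y ^ 2) / 2) - 2 * Real.exp (-(2 * y ^ 2))

noncomputable def h (y : ℝ) : ℝ := (1 - Real.exp (-(2 * y ^ 2))) / (2 * y)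

lemma one_sub_exp_le (u : ℝ) : 1 - Real.exp (-u) ≤ u := by
  nlinarith [Real.add_one_le_exp (-u)]

lemma one_sub_exp_nonneg {u : ℝ} (hu : 0 ≤ u) : 0 ≤ 1 - Real.exp (-u) := by
  nlinarith [Real.exp_le_one_iff.2 (by linarith : -u ≤ 0)]

lemma f_measurable : Measurable f := by
  unfold f; fun_prop

lemma f_abs_le (y : ℝ) : |f y| ≤ 2 := by
  have h1 : |Real.exp (-(y ^ 2) / 2)| ≤ 1 := by
    rw [abs_of_pos (Real.exp_pos _)]
    exact Real.exp_le_one_iff.2 (by nlinarith [sq_nonneg y])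
  have h2 : |1 / (2 * y ^ 2) * (1 - Real.exp (-(2 * y ^ 2)))| ≤ 1 := by
    rcases eq_or_ne y 0 with rfl | hy
    · norm_num
    · have hy2 : (0:ℝ) < 2 * y ^ 2 := by positivity
      have hle : 1 - Real.exp (-(2 * y ^ 2)) ≤ 2 * y ^ 2 := one_sub_exp_le _
      have hge : 0 ≤ 1 - Real.exp (-(2 * y ^ 2)) := one_sub_exp_nonneg (by positivity)
      rw [abs_of_nonneg (by positivity)]
      rw [div_mul_eq_mul_div, one_mul, div_le_one hy2]
      exact hle
  calc |f y| ≤ |Real.exp (-(y ^ 2) / 2)| + |1 / (2 * y ^ 2) * (1 - Real.exp (-(2 * y ^ 2)))| :=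
        abs_sub _ _
    _ ≤ 2 := by linarith

lemma g_abs_le (y : ℝ) : |g y| ≤ 3 := by
  have h1 : |Real.exp (-(y ^ 2) / 2)| ≤ 1 := by
    rw [abs_of_pos (Real.exp_pos _)]
    exact Real.exp_le_one_iff.2 (by nlinarith [sq_nonneg y])
  have h2 : |2 * Real.exp (-(2 * y ^ 2))| ≤ 2 := by
    rw [abs_of_pos (by positivity)]
    nlinarith [Real.exp_le_one_iff.2 (show -(2 * y ^ 2) ≤ 0 by nlinarith [sq_nonneg y])]
  calc |g y| ≤ |Real.exp (-(y ^ 2) / 2)| + |2 * Real.exp (-(2 * y ^ 2))| := abs_sub _ _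
    _ ≤ 3 := by linarith

lemma h_abs_le (y : ℝ) : |h y| ≤ |y| := by
  rcases eq_or_ne y 0 with rfl | hy
  · simp [h]
  · have hnum : |1 - Real.exp (-(2 * y ^ 2))| ≤ 2 * y ^ 2 := by
      rw [abs_of_nonneg (one_sub_exp_nonneg (by positivity))]
      exact one_sub_exp_le _
    have hden : |2 * y| = 2 * |y| := by rw [abs_mul]; norm_num
    have hy' : (0:ℝ) < |y| := abs_pos.2 hy
    rw [h, abs_div, hden, div_le_iff₀ (by positivity)]
    calc |1 - Real.exp (-(2 * y ^ 2))| ≤ 2 * y ^ 2 := hnum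
      _ = |y| * (2 * |y|) := by rw [← sq_abs]; ring
  
lemma f_intervalIntegrable (a b : ℝ) : IntervalIntegrable f volume a b := by
  rw [intervalIntegrable_iff]
  refine Measure.integrableOn_of_bounded (M := 2) ?_ f_measurable.aestronglyMeasurable ?_
  · rw [Set.uIoc]; exact measure_Ioc_lt_top.ne
  · exact Eventually.of_forall fun y => by simpa using f_abs_le y

lemma g_continuous : Continuous g := by
  unfold g; fun_prop

lemma g_intervalIntegrable (a b : ℝ) : IntervalIntegrable g volume a b :=
  g_continuous.intervalIntegrable a b

lemma i1_integrable : Integrable (fun y : ℝ => Real.exp (-(y ^ 2) / 2)) := by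
  rw [show (fun y : ℝ => Real.exp (-(y ^ 2) / 2))
    = fun y : ℝ => Real.exp (-(1/2 : ℝ) * y ^ 2) from funext fun y => by congr 1; ring]
  exact integrable_exp_neg_mul_sq (by norm_num)

lemma i2_integrable : Integrable (fun y : ℝ => 2 * Real.exp (-(2 * y ^ 2))) := by
  rw [show (fun y : ℝ => 2 * Real.exp (-(2 * y ^ 2)))
    = fun y : ℝ => 2 * Real.exp (-(2:ℝ) * y ^ 2) from funext fun y => by congr 2; ring]
  exact (integrable_exp_neg_mul_sq (by norm_num)).const_mul 2

lemma g_integrable : Integrable g := by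
  exact i1_integrable.sub i2_integrable

lemma h_hasDerivAt {y : ℝ} (hy : y ≠ 0) :
    HasDerivAt h (2 * Real.exp (-(2 * y ^ 2)) - 1 / (2 * y ^ 2) * (1 - Real.exp (-(2 * y ^ 2)))) y := by
  have hE : HasDerivAt (fun y : ℝ => Real.exp (-(2 * y ^ 2))) (Real.exp (-(2 * y ^ 2)) * -(4 * y)) y := by
    have h1 : HasDerivAt (fun y : ℝ => -(2 * y ^ 2)) (-(4 * y)) y := by
      have := ((hasDerivAt_pow 2 y).const_mul (2:ℝ)).neg
      refine this.congr_deriv ?_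
      simp; ring
    exact h1.exp
  have hnum : HasDerivAt (fun y : ℝ => 1 - Real.exp (-(2 * y ^ 2)))
      (-(Real.exp (-(2 * y ^ 2)) * -(4 * y))) y := hE.const_sub 1
  have hden : HasDerivAt (fun y : ℝ => 2 * y) 2 y := by
    simpa using (hasDerivAt_id y).const_mul (2:ℝ)
  have h2y : (2 * y) ≠ 0 := by simpa using hy
  have hd := hnum.div hden h2y
  refine hd.congr_deriv ?_
  field_simp
  ring

/-- key identity: for `x > 0`, `∫_0^x f = ∫_0^x g + h x`. -/
lemma integral_f_eq {x : ℝ} (hx : 0 < x) :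
    ∫ y in (0:ℝ)..x, f y = (∫ y in (0:ℝ)..x, g y) + h x := by
  have key : ∀ ε ∈ Ioo (0:ℝ) x,
      ∫ y in (0:ℝ)..x, f y
        = (∫ y in (0:ℝ)..ε, f y) - (∫ y in (0:ℝ)..ε, g y)
          + ((∫ y in (0:ℝ)..x, g y) + h x) - h ε := by
    intro ε hε
    have hεx : ε ≤ x := hε.2.le
    have hftc : ∫ y in ε..x, (f y - g y) = h x - h ε := by
      refine intervalIntegral.integral_eq_sub_of_hasDerivAt (fun y hy => ?_) ?_
      · have hy0 : y ≠ 0 := by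
          rw [Set.uIcc_of_le hεx] at hy
          exact ne_of_gt (lt_of_lt_of_le hε.1 hy.1)
        have hhd := h_hasDerivAt hy0
        refine hhd.congr_deriv ?_
        unfold f g
        ring
      · exact (f_intervalIntegrable ε x).sub (g_intervalIntegrable ε x)
    have hsub : (∫ y in ε..x, f y) - ∫ y in ε..x, g y = h x - h ε := by
      rw [← intervalIntegral.integral_sub (f_intervalIntegrable ε x) (g_intervalIntegrable ε x)]
      exact hftc
    have hsplitf : (∫ y in (0:ℝ)..ε, f y) + ∫ y in ε..x, f y = ∫ y in (0:ℝ)..x, f y :=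
      intervalIntegral.integral_add_adjacent_intervals (f_intervalIntegrable 0 ε)
        (f_intervalIntegrable ε x)
    have hsplitg : (∫ y in (0:ℝ)..ε, g y) + ∫ y in ε..x, g y = ∫ y in (0:ℝ)..x, g y :=
      intervalIntegral.integral_add_adjacent_intervals (g_intervalIntegrable 0 ε)
        (g_intervalIntegrable ε x)
    linarith
  have hmem : Ioo (0:ℝ) x ∈ 𝓝[>] (0:ℝ) := Ioo_mem_nhdsGT_of_mem ⟨le_refl 0, hx⟩
  have t1 : Tendsto (fun ε : ℝ => ∫ y in (0:ℝ)..ε, f y) (𝓝[>] (0:ℝ)) (𝓝 0) := by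
    have hb : ∀ ε : ℝ, ‖∫ y in (0:ℝ)..ε, f y‖ ≤ 2 * |ε| := by
      intro ε
      calc ‖∫ y in (0:ℝ)..ε, f y‖ ≤ 2 * |ε - 0| :=
          intervalIntegral.norm_integral_le_of_norm_le_const
            (fun y _ => by simpa using f_abs_le y)
        _ = 2 * |ε| := by rw [sub_zero]
    refine squeeze_zero_norm hb ?_
    have : Tendsto (fun ε : ℝ => 2 * |ε|) (𝓝 0) (𝓝 (2 * |(0:ℝ)|)) :=
      (continuous_abs.tendsto 0).const_mul 2
    simpa using this.mono_left nhdsWithin_le_nhds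
  have t2 : Tendsto (fun ε : ℝ => ∫ y in (0:ℝ)..ε, g y) (𝓝[>] (0:ℝ)) (𝓝 0) := by
    have hb : ∀ ε : ℝ, ‖∫ y in (0:ℝ)..ε, g y‖ ≤ 3 * |ε| := by
      intro ε
      calc ‖∫ y in (0:ℝ)..ε, g y‖ ≤ 3 * |ε - 0| :=
          intervalIntegral.norm_integral_le_of_norm_le_const
            (fun y _ => by simpa using g_abs_le y)
        _ = 3 * |ε| := by rw [sub_zero]
    refine squeeze_zero_norm hb ?_
    have : Tendsto (fun ε : ℝ => 3 * |ε|) (𝓝 0) (𝓝 (3 * |(0:ℝ)|)) :=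
      (continuous_abs.tendsto 0).const_mul 3
    simpa using this.mono_left nhdsWithin_le_nhds
  have t3 : Tendsto h (𝓝[>] (0:ℝ)) (𝓝 0) := by
    have hb : ∀ ε : ℝ, ‖h ε‖ ≤ |ε| := fun ε => h_abs_le ε
    refine squeeze_zero_norm hb ?_
    simpa using (continuous_abs.tendsto 0).mono_left (nhdsWithin_le_nhds (s := Ioi (0:ℝ)))
  have hT : Tendsto (fun ε : ℝ =>
      (∫ y in (0:ℝ)..ε, f y) - (∫ y in (0:ℝ)..ε, g y)
        + ((∫ y in (0:ℝ)..x, g y) + h x) - h ε) (𝓝[>] (0:ℝ))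
      (𝓝 ((∫ y in (0:ℝ)..x, g y) + h x)) := by
    have := (((t1.sub t2).add (tendsto_const_nhds
      (x := (∫ y in (0:ℝ)..x, g y) + h x))).sub t3)
    simpa using this
  have hconst : Tendsto (fun _ : ℝ => ∫ y in (0:ℝ)..x, f y) (𝓝[>] (0:ℝ))
      (𝓝 (∫ y in (0:ℝ)..x, f y)) := tendsto_const_nhds
  refine tendsto_nhds_unique hconst (hT.congr' ?_)
  filter_upwards [hmem] with ε hε
  exact (key ε hε).symm


lemma integral_g_Ioi_zero : ∫ y in Ioi (0:ℝ), g y = 0 := by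
  have e1 : ∫ y in Ioi (0:ℝ), Real.exp (-(y ^ 2) / 2)
      = Real.sqrt (Real.pi / (1/2)) / 2 := by
    rw [show (fun y : ℝ => Real.exp (-(y ^ 2) / 2))
      = fun y : ℝ => Real.exp (-(1/2 : ℝ) * y ^ 2) from funext fun y => by congr 1; ring]
    exact integral_gaussian_Ioi (1/2)
  have e2 : ∫ y in Ioi (0:ℝ), 2 * Real.exp (-(2 * y ^ 2))
      = 2 * (Real.sqrt (Real.pi / 2) / 2) := by
    rw [show (fun y : ℝ => 2 * Real.exp (-(2 * y ^ 2)))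
      = fun y : ℝ => 2 * Real.exp (-(2:ℝ) * y ^ 2) from funext fun y => by congr 2; ring]
    rw [integral_const_mul, integral_gaussian_Ioi 2]
  have hsplit : ∫ y in Ioi (0:ℝ), g y
      = (∫ y in Ioi (0:ℝ), Real.exp (-(y ^ 2) / 2))
        - ∫ y in Ioi (0:ℝ), 2 * Real.exp (-(2 * y ^ 2)) := by
    unfold g
    exact integral_sub i1_integrable.integrableOn i2_integrable.integrableOn
  rw [hsplit, e1, e2]
  have h1 : Real.pi / (1/2) = 4 * (Real.pi / 2) := by ring
  rw [h1, Real.sqrt_mul (by norm_num : (0:ℝ) ≤ 4),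
    show Real.sqrt (4:ℝ) = 2 by
      rw [show (4:ℝ) = 2 ^ 2 by norm_num, Real.sqrt_sq (by norm_num : (0:ℝ) ≤ 2)]]
  ring

lemma integral_g_eq {x : ℝ} (hx : 0 < x) :
    ∫ y in (0:ℝ)..x, g y = - ∫ y in Ioi x, g y := by
  have hsplit : ∫ y in Ioi (0:ℝ), g y
      = (∫ y in Ioc (0:ℝ) x, g y) + ∫ y in Ioi x, g y := by
    rw [← setIntegral_union ?_ measurableSet_Ioi g_integrable.integrableOn
      g_integrable.integrableOn, Ioc_union_Ioi_eq_Ioi hx.le]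
    rw [Set.disjoint_left]
    intro y hy1 hy2
    exact absurd hy1.2 (not_le.2 hy2)
  rw [intervalIntegral.integral_of_le hx.le]
  have := integral_g_Ioi_zero
  rw [hsplit] at this
  linarith

lemma tail_bound {x : ℝ} (hx : 2 ≤ x) :
    |∫ y in Ioi x, g y| ≤ 3 * Real.exp (-x) := by
  have hpt : ∀ y ∈ Ioi x, |g y| ≤ 3 * Real.exp (-y) := by
    intro y hy
    have hy2 : 2 ≤ y := le_trans hx (le_of_lt hy)
    have h1 : Real.exp (-(y ^ 2) / 2) ≤ Real.exp (-y) := Real.exp_le_exp.2 (by nlinarith)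
    have h2 : Real.exp (-(2 * y ^ 2)) ≤ Real.exp (-y) := Real.exp_le_exp.2 (by nlinarith)
    have e1 := Real.exp_pos (-(y ^ 2) / 2)
    have e2 := Real.exp_pos (-(2 * y ^ 2))
    calc |g y| ≤ |Real.exp (-(y ^ 2) / 2)| + |2 * Real.exp (-(2 * y ^ 2))| := abs_sub _ _
      _ = Real.exp (-(y ^ 2) / 2) + 2 * Real.exp (-(2 * y ^ 2)) := by
          rw [abs_of_pos e1, abs_of_pos (by positivity)]
      _ ≤ 3 * Real.exp (-y) := by linarith
  have hint : IntegrableOn (fun y : ℝ => 3 * Real.exp (-y)) (Ioi x) := by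
    have := (exp_neg_integrableOn_Ioi x (show (0:ℝ) < 1 by norm_num)).const_mul 3
    simpa [neg_one_mul, IntegrableOn] using this
  calc |∫ y in Ioi x, g y| ≤ ∫ y in Ioi x, |g y| := by
        simpa [Real.norm_eq_abs] using
          norm_integral_le_integral_norm (f := g) (μ := volume.restrict (Ioi x))
    _ ≤ ∫ y in Ioi x, 3 * Real.exp (-y) :=
        setIntegral_mono_on g_integrable.abs.integrableOn hint measurableSet_Ioi hpt
    _ = 3 * Real.exp (-x) := by rw [integral_const_mul, integral_exp_neg_Ioi]

lemma main : Tendsto (fun x : ℝ => x * ∫ y in (0:ℝ)..x, f y) atTop (𝓝 (1/2)) := by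
  have heq : ∀ᶠ x in atTop, (-(x * ∫ y in Ioi x, g y) + (1 - Real.exp (-(2 * x ^ 2))) / 2)
      = x * ∫ y in (0:ℝ)..x, f y := by
    filter_upwards [eventually_gt_atTop (0:ℝ)] with x hx0
    rw [integral_f_eq hx0, integral_g_eq hx0]
    unfold h
    field_simp
  have t1 : Tendsto (fun x : ℝ => x * ∫ y in Ioi x, g y) atTop (𝓝 0) := by
    have hb : ∀ᶠ x : ℝ in atTop, ‖x * ∫ y in Ioi x, g y‖ ≤ 3 * (x * Real.exp (-x)) := by
      filter_upwards [eventually_ge_atTop (2:ℝ)] with x hx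
      have hx0 : (0:ℝ) ≤ x := by linarith
      calc ‖x * ∫ y in Ioi x, g y‖ = x * |∫ y in Ioi x, g y| := by
            rw [norm_mul, Real.norm_eq_abs, Real.norm_eq_abs, abs_of_nonneg hx0]
        _ ≤ x * (3 * Real.exp (-x)) := by
            exact mul_le_mul_of_nonneg_left (tail_bound hx) hx0
        _ = 3 * (x * Real.exp (-x)) := by ring
    refine squeeze_zero_norm' hb ?_
    have := (tendsto_pow_mul_exp_neg_atTop_nhds_zero 1).const_mul (3:ℝ)
    simpa [pow_one, mul_comm] using this
  have t2 : Tendsto (fun x : ℝ => (1 - Real.exp (-(2 * x ^ 2))) / 2) atTop (𝓝 (1/2)) := by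
    have hexp : Tendsto (fun x : ℝ => Real.exp (-(2 * x ^ 2))) atTop (𝓝 0) := by
      have hb : ∀ᶠ x : ℝ in atTop, ‖Real.exp (-(2 * x ^ 2))‖ ≤ Real.exp (-x) := by
        filter_upwards [eventually_ge_atTop (1:ℝ)] with x hx
        rw [Real.norm_eq_abs, abs_of_pos (Real.exp_pos _)]
        exact Real.exp_le_exp.2 (by nlinarith)
      exact squeeze_zero_norm' hb Real.tendsto_exp_neg_atTop_nhds_zero
    have := (tendsto_const_nhds (x := (1:ℝ)) (f := atTop)).sub hexp |>.div_const 2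
    simpa using this
  have := (t1.neg.add t2)
  rw [neg_zero, zero_add] at this
  exact this.congr' heq

end Stmt4Aux

theorem stmt_4 :
    Filter.Tendsto (fun t : ℝ => rCall 1 t / Real.sqrt t) (nhdsWithin 0 (Set.Ioi 0))
      (nhds (1 / Real.sqrt (2 * Real.pi))) := by
  have hcomp : Tendsto (fun t : ℝ => 1 / Real.sqrt t) (𝓝[>] (0:ℝ)) atTop := by
    have h1 : Tendsto Real.sqrt (𝓝[>] (0:ℝ)) (𝓝[>] (0:ℝ)) := by
      apply tendsto_nhdsWithin_of_tendsto_nhds_of_eventually_within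
      · simpa [Real.sqrt_zero] using
          (Real.continuous_sqrt.tendsto 0).mono_left nhdsWithin_le_nhds
      · filter_upwards [self_mem_nhdsWithin] with t ht
        exact Real.sqrt_pos.2 ht
    simpa [one_div, Function.comp_def] using tendsto_inv_nhdsGT_zero.comp h1
  have hT : Tendsto (fun t : ℝ => Real.sqrt (2 / Real.pi) *
      ((1 / Real.sqrt t) * ∫ y in (0:ℝ)..(1 / Real.sqrt t), Stmt4Aux.f y))
      (𝓝[>] (0:ℝ)) (𝓝 (Real.sqrt (2 / Real.pi) * (1/2))) :=
    ((Stmt4Aux.main).comp hcomp).const_mul _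
  have hval : Real.sqrt (2 / Real.pi) * (1/2) = 1 / Real.sqrt (2 * Real.pi) := by
    have hπ : (0:ℝ) < Real.pi := Real.pi_pos
    have h4 : Real.sqrt (2 / Real.pi) * Real.sqrt (2 * Real.pi) = 2 := by
      rw [← Real.sqrt_mul (by positivity)]
      rw [show (2 / Real.pi) * (2 * Real.pi) = 2 ^ 2 by field_simp]
      exact Real.sqrt_sq (by norm_num)
    have hs : (0:ℝ) < Real.sqrt (2 * Real.pi) := Real.sqrt_pos.2 (by positivity)
    rw [eq_div_iff hs.ne']
    nlinarith [h4]
  rw [← hval]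
  refine Tendsto.congr' ?_ hT
  filter_upwards [self_mem_nhdsWithin] with t ht
  have hst : 0 < Real.sqrt t := Real.sqrt_pos.2 ht
  have hint : (∫ y in (0:ℝ)..(1 / Real.sqrt t),
      (Real.exp (-(y ^ 2) / 2) -
        (1 / (2 * 1 * y ^ 2)) *
          (Real.exp (-((1 - 1) ^ 2 * y ^ 2) / 2) - Real.exp (-((1 + 1) ^ 2 * y ^ 2) / 2))))
      = ∫ y in (0:ℝ)..(1 / Real.sqrt t), Stmt4Aux.f y := by
    refine intervalIntegral.integral_congr fun y _ => ?_
    unfold Stmt4Aux.f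
    have h1 : -(((1:ℝ) - 1) ^ 2 * y ^ 2) / 2 = 0 := by ring
    have h2 : -(((1:ℝ) + 1) ^ 2 * y ^ 2) / 2 = -(2 * y ^ 2) := by ring
    rw [h1, h2, Real.exp_zero]
    norm_num
  unfold rCall
  rw [hint]
  field_simp
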